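/- Let q, N be positive integers and let (a_k), (a'_k) be two sequences of complex numbers whose generating functions ∑ a_k z^k and ∑ a'_k z^k both equal a polynomial of degree < q(N+1) divided by (1-z^q)^{N+1} (as formal power series). Suppose A ⊆ ℕ satisfies |A ∩ (j + qℤ)| ≥ N+1 for every 0 ≤ j ≤ q-1, and a_k = a'_k for all k ∈ A. Then a_k = a'_k for all k ∈ ℕ. -/

import Mathlib

theorem stmt6 (q N : ℕ) (hq : 0 < q) (hN : 0 < N) (a a' : ℕ → ℂ)
    (p p' : Polynomial ℂ)
    (hdeg : p.degree < (q * (N + 1) : ℕ)) (hdeg' : p'.degree < (q * (N + 1) : ℕ))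
    (hF : PowerSeries.mk a * (1 - PowerSeries.X ^ q) ^ (N + 1) = (p : PowerSeries ℂ))
    (hF' : PowerSeries.mk a' * (1 - PowerSeries.X ^ q) ^ (N + 1) = (p' : PowerSeries ℂ))
    (A : Set ℕ)
    (hA : ∀ j < q, (N + 1 : ℕ∞) ≤ {k | k ∈ A ∧ k % q = j}.encard)
    (heq : ∀ k ∈ A, a k = a' k) :
    ∀ k : ℕ, a k = a' k := by
  classical
  set b : ℕ → ℂ := fun k => a k - a' k with hbdef
  set r : Polynomial ℂ := p - p' with hrdef
  have hFr : PowerSeries.mk b * (1 - PowerSeries.X ^ q) ^ (N + 1) = (r : PowerSeries ℂ) := by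
    have hmk : PowerSeries.mk b = PowerSeries.mk a - PowerSeries.mk a' := by
      ext n; simp [hbdef]
    rw [hmk, sub_mul, hF, hF', hrdef, Polynomial.coe_sub]
  have hrdeg : r.degree < (q * (N + 1) : ℕ) :=
    lt_of_le_of_lt (Polynomial.degree_sub_le p p') (max_lt hdeg hdeg')
  have hrc : ∀ j l : ℕ, N < l → r.coeff (j + q * l) = 0 := by
    intro j l hl
    apply Polynomial.coeff_eq_zero_of_degree_lt
    refine lt_of_lt_of_le hrdeg ?_
    have : q * (N + 1) ≤ j + q * l := by
      have : q * (N + 1) ≤ q * l := Nat.mul_le_mul_left q hl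
      omega
    exact_mod_cast Nat.cast_le.mpr this
  -- slicing along arithmetic progressions
  have slice_mul : ∀ (j : ℕ), j < q → ∀ f : PowerSeries ℂ,
      (PowerSeries.mk fun m => PowerSeries.coeff (j + q * m) (f * (1 - PowerSeries.X ^ q)))
        = (PowerSeries.mk fun m => PowerSeries.coeff (j + q * m) f)
          * (1 - PowerSeries.X) := by
    intro j hj f
    ext m
    simp only [mul_sub, mul_one, map_sub, PowerSeries.coeff_mk]
    congr 1
    rw [PowerSeries.coeff_mul_X_pow',
      show (PowerSeries.X : PowerSeries ℂ) = PowerSeries.X ^ 1 from (pow_one _).symm,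
      PowerSeries.coeff_mul_X_pow']
    rcases m with _ | m
    · rw [if_neg (by omega), if_neg (by omega)]
    · simp only [Nat.mul_succ, Nat.add_sub_cancel]
      rw [if_pos (by omega), if_pos (by omega), PowerSeries.coeff_mk]
      congr 2
      omega
  have slice_pow : ∀ (j : ℕ), j < q → ∀ (n : ℕ) (f : PowerSeries ℂ),
      (PowerSeries.mk fun m => PowerSeries.coeff (j + q * m) (f * (1 - PowerSeries.X ^ q) ^ n))
        = (PowerSeries.mk fun m => PowerSeries.coeff (j + q * m) f)
          * (1 - PowerSeries.X) ^ n := by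
    intro j hj n
    induction n with
    | zero => intro f; simp
    | succ n ih =>
      intro f
      have h1 : f * (1 - PowerSeries.X ^ q) ^ (n + 1)
          = (f * (1 - PowerSeries.X ^ q) ^ n) * (1 - PowerSeries.X ^ q) := by ring
      rw [h1, slice_mul j hj, ih, pow_succ, mul_assoc]
  -- the key vanishing on each residue class
  have key : ∀ j, j < q → ∀ m, b (j + q * m) = 0 := by
    intro j hj
    set d : ℕ → ℂ := fun l => r.coeff (j + q * l) with hddef
    have hB : (PowerSeries.mk fun m => b (j + q * m)) * (1 - PowerSeries.X) ^ (N + 1)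
        = PowerSeries.mk d := by
      have h1 := slice_pow j hj (N + 1) (PowerSeries.mk b)
      simp only [hFr] at h1
      have h2 : (PowerSeries.mk fun m => (PowerSeries.coeff (j + q * m)) (PowerSeries.mk b))
          = PowerSeries.mk fun m => b (j + q * m) := by
        ext m; simp
      have h3 : (PowerSeries.mk fun m => (PowerSeries.coeff (j + q * m)) (r : PowerSeries ℂ))
          = PowerSeries.mk d := by
        ext m; simp [hddef, Polynomial.coeff_coe]
      rw [← h2, ← h3]
      exact h1.symm
    have hd0 : ∀ l, N < l → d l = 0 := fun l hl => hrc j l hl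
    have hu : (PowerSeries.mk fun n => ((N + n).choose N : ℂ)) * (1 - PowerSeries.X) ^ (N + 1)
        = 1 := PowerSeries.mk_add_choose_mul_one_sub_pow_eq_one ℂ N
    have hBinv : (PowerSeries.mk fun m => b (j + q * m))
        = PowerSeries.mk d * (PowerSeries.mk fun v => ((N + v).choose N : ℂ)) := by
      calc (PowerSeries.mk fun m => b (j + q * m))
          = (PowerSeries.mk fun m => b (j + q * m))
            * ((PowerSeries.mk fun n => ((N + n).choose N : ℂ))
              * (1 - PowerSeries.X) ^ (N + 1)) := by rw [hu, mul_one]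
        _ = ((PowerSeries.mk fun m => b (j + q * m)) * (1 - PowerSeries.X) ^ (N + 1))
            * (PowerSeries.mk fun n => ((N + n).choose N : ℂ)) := by ring
        _ = PowerSeries.mk d * (PowerSeries.mk fun v => ((N + v).choose N : ℂ)) := by rw [hB]
    have hcoef : ∀ m, b (j + q * m)
        = ∑ l ∈ Finset.range (N + 1),
            d l * (if l ≤ m then (((m - l + N).choose N : ℕ) : ℂ) else 0) := by
      intro m
      have h1 : b (j + q * m)
          = PowerSeries.coeff m (PowerSeries.mk fun m => b (j + q * m)) := by simp
      rw [h1, hBinv, PowerSeries.coeff_mul, Finset.Nat.sum_antidiagonal_eq_sum_range_succ_mk]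
      simp only [PowerSeries.coeff_mk]
      have e1 : ∑ l ∈ Finset.range (m + 1), d l * (((N + (m - l)).choose N : ℕ) : ℂ)
          = ∑ l ∈ Finset.range (m + 1),
              d l * (if l ≤ m then (((m - l + N).choose N : ℕ) : ℂ) else 0) := by
        apply Finset.sum_congr rfl
        intro l hl
        have hlm : l ≤ m := Nat.lt_succ_iff.mp (Finset.mem_range.mp hl)
        rw [if_pos hlm]
        have : N + (m - l) = m - l + N := Nat.add_comm _ _
        rw [this]
      rw [e1]
      set M := max m N with hM
      have e2 : ∑ l ∈ Finset.range (m + 1),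
            d l * (if l ≤ m then (((m - l + N).choose N : ℕ) : ℂ) else 0)
          = ∑ l ∈ Finset.range (M + 1),
            d l * (if l ≤ m then (((m - l + N).choose N : ℕ) : ℂ) else 0) := by
        apply Finset.sum_subset (Finset.range_subset_range.mpr (by omega))
        intro x hx hnx
        have : m < x := by
          simp only [Finset.mem_range] at hnx
          omega
        rw [if_neg (by omega), mul_zero]
      have e3 : ∑ l ∈ Finset.range (N + 1),
            d l * (if l ≤ m then (((m - l + N).choose N : ℕ) : ℂ) else 0)
          = ∑ l ∈ Finset.range (M + 1),
            d l * (if l ≤ m then (((m - l + N).choose N : ℕ) : ℂ) else 0) := by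
        apply Finset.sum_subset (Finset.range_subset_range.mpr (by omega))
        intro x hx hnx
        have : N < x := by
          simp only [Finset.mem_range] at hnx
          omega
        rw [hd0 x this, zero_mul]
      rw [e2, ← e3]
    -- the interpolating polynomial
    set P : Polynomial ℂ := ∑ l ∈ Finset.range (N + 1),
        Polynomial.C (d l / (N.factorial : ℂ))
          * (descPochhammer ℂ N).comp (Polynomial.X + Polynomial.C ((N : ℂ) - l)) with hPdef
    have hNfac : (N.factorial : ℂ) ≠ 0 := Nat.cast_ne_zero.mpr (Nat.factorial_ne_zero N)
    have hPeval : ∀ m : ℕ, P.eval (m : ℂ) = b (j + q * m) := by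
      intro m
      rw [hcoef m, hPdef, Polynomial.eval_finset_sum]
      apply Finset.sum_congr rfl
      intro l hl
      have hlN : l ≤ N := Nat.lt_succ_iff.mp (Finset.mem_range.mp hl)
      rw [Polynomial.eval_mul, Polynomial.eval_C, Polynomial.eval_comp, Polynomial.eval_add,
        Polynomial.eval_X, Polynomial.eval_C]
      by_cases hlm : l ≤ m
      · have harg : (m : ℂ) + ((N : ℂ) - l) = ((m - l + N : ℕ) : ℂ) := by
          have : ((m - l : ℕ) : ℂ) = (m : ℂ) - l := by
            push_cast [Nat.cast_sub hlm]; ring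
          push_cast [this]; ring
        rw [harg, descPochhammer_eval_eq_descFactorial, if_pos hlm,
          Nat.descFactorial_eq_factorial_mul_choose]
        push_cast
        field_simp
      · have harg : (m : ℂ) + ((N : ℂ) - l) = ((m + N - l : ℕ) : ℂ) := by
          have : ((m + N - l : ℕ) : ℂ) = (m : ℂ) + N - l := by
            push_cast [Nat.cast_sub (le_trans hlN (Nat.le_add_left N m))]; ring
          rw [this]; ring
        rw [harg, descPochhammer_eval_eq_descFactorial, if_neg hlm,
          Nat.descFactorial_eq_zero_iff_lt.mpr (by omega)]
        simp
    have hPdeg : P.natDegree ≤ N := by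
      rw [hPdef]
      apply Polynomial.natDegree_sum_le_of_forall_le
      intro l hl
      refine le_trans (Polynomial.natDegree_C_mul_le _ _) ?_
      rw [Polynomial.natDegree_comp, Polynomial.natDegree_X_add_C, mul_one,
        descPochhammer_natDegree]
    -- extract N+1 roots
    obtain ⟨t, htsub, htcard⟩ := Set.exists_subset_encard_eq (hA j hj)
    have htcard' : t.encard = ((N + 1 : ℕ) : ℕ∞) := by exact_mod_cast htcard
    have htfin : t.Finite := Set.finite_of_encard_eq_coe htcard'
    set s : Finset ℕ := htfin.toFinset with hsdef
    have hscard : s.card = N + 1 := by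
      have h := htfin.encard_eq_coe_toFinset_card
      rw [htcard'] at h
      exact_mod_cast h.symm
    have hmem : ∀ k ∈ s, k ∈ A ∧ k % q = j := by
      intro k hk
      exact htsub (htfin.mem_toFinset.mp hk)
    have hinj : Set.InjOn (fun k : ℕ => ((k / q : ℕ) : ℂ)) s := by
      intro k1 h1 k2 h2 he
      have e1 := (hmem k1 h1).2
      have e2 := (hmem k2 h2).2
      have he' : ((k1 / q : ℕ) : ℂ) = ((k2 / q : ℕ) : ℂ) := he
      have hd : (k1 / q : ℕ) = (k2 / q : ℕ) := Nat.cast_injective he'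
      have d1 := Nat.div_add_mod k1 q
      have d2 := Nat.div_add_mod k2 q
      have hmul : q * (k1 / q) = q * (k2 / q) := by rw [hd]
      omega
    have hP0 : P = 0 := by
      apply Polynomial.eq_zero_of_natDegree_lt_card_of_eval_eq_zero' P
        (s.image (fun k : ℕ => ((k / q : ℕ) : ℂ)))
      · intro x hx
        obtain ⟨k, hk, rfl⟩ := Finset.mem_image.mp hx
        rw [hPeval]
        have hkA := (hmem k hk).1
        have hkj := (hmem k hk).2
        have hkk : j + q * (k / q) = k := by
          have := Nat.div_add_mod k q
          omega
        rw [hkk]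
        simp only [hbdef]
        rw [heq k hkA, sub_self]
      · rw [Finset.card_image_of_injOn hinj, hscard]
        omega
    intro m
    rw [← hPeval m, hP0, Polynomial.eval_zero]
  intro k
  have h := key (k % q) (Nat.mod_lt k hq) (k / q)
  rw [Nat.mod_add_div k q] at h
  have h' : a k - a' k = 0 := h
  exact sub_eq_zero.mp h'
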